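/- Let (V, Q) be an FBAS with top tier T. Then every minimal blocking set B of (V, Q) satisfies B ⊆ T. -/
import Mathlib


open Finset

variable {α : Type*} [DecidableEq α]

/-- `U` is a quorum of the FBAS `(V, Q)`: a nonempty subset of `V` containing,
for every member `v`, some slice `q ∈ Q v` with `q ⊆ U`. -/
def IsQuorum (V : Finset α) (Q : α → Finset (Finset α)) (U : Finset α) : Prop :=
  U ⊆ V ∧ U.Nonempty ∧ ∀ v ∈ U, ∃ q ∈ Q v, q ⊆ U

/-- A minimal quorum: a quorum none of whose proper subsets is a quorum. -/
def IsMinimalQuorum (V : Finset α) (Q : α → Finset (Finset α)) (U : Finset α) : Prop :=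
  IsQuorum V Q U ∧ ∀ U' ⊂ U, ¬IsQuorum V Q U'

/-- A blocking set: a subset of `V` intersecting every quorum of `(V, Q)`. -/
def IsBlocking (V : Finset α) (Q : α → Finset (Finset α)) (B : Finset α) : Prop :=
  B ⊆ V ∧ ∀ U, IsQuorum V Q U → (B ∩ U).Nonempty

/-- A minimal blocking set: a blocking set none of whose proper subsets is blocking. -/
def IsMinimalBlocking (V : Finset α) (Q : α → Finset (Finset α)) (B : Finset α) : Prop :=
  IsBlocking V Q B ∧ ∀ B' ⊂ B, ¬IsBlocking V Q B'

/-- A splitting set: a subset of `V` containing the intersection of two distinct quorums. -/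
def IsSplitting (V : Finset α) (Q : α → Finset (Finset α)) (S : Finset α) : Prop :=
  S ⊆ V ∧ ∃ U₁ U₂, IsQuorum V Q U₁ ∧ IsQuorum V Q U₂ ∧ U₁ ≠ U₂ ∧ U₁ ∩ U₂ ⊆ S

/-- A minimal splitting set: a splitting set none of whose proper subsets is splitting. -/
def IsMinimalSplitting (V : Finset α) (Q : α → Finset (Finset α)) (S : Finset α) : Prop :=
  IsSplitting V Q S ∧ ∀ S' ⊂ S, ¬IsSplitting V Q S'

/-- Well-formedness of an FBAS `(V, Q)`: every slice of every node `v ∈ V`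
contains `v` and is a subset of `V`. -/
def WellFormed (V : Finset α) (Q : α → Finset (Finset α)) : Prop :=
  ∀ v ∈ V, ∀ q ∈ Q v, v ∈ q ∧ q ⊆ V

/-- `T` is the top tier of `(V, Q)`: the union of all minimal quorums. -/
def IsTopTier (V : Finset α) (Q : α → Finset (Finset α)) (T : Finset α) : Prop :=
  ∀ v, v ∈ T ↔ ∃ U, IsMinimalQuorum V Q U ∧ v ∈ U

/-- `(V, Q)` enjoys quorum intersection: any two quorums share a node. -/
def QuorumIntersection (V : Finset α) (Q : α → Finset (Finset α)) : Prop :=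
  ∀ U₁ U₂, IsQuorum V Q U₁ → IsQuorum V Q U₂ → (U₁ ∩ U₂).Nonempty


lemma exists_minimal_quorum_subset (V : Finset α) (Q : α → Finset (Finset α)) :
    ∀ U, IsQuorum V Q U → ∃ U', U' ⊆ U ∧ IsMinimalQuorum V Q U' := by
  intro U
  induction U using Finset.strongInduction with
  | _ U ih =>
    intro hU
    by_cases h : ∀ U' ⊂ U, ¬IsQuorum V Q U'
    · exact ⟨U, subset_rfl, hU, h⟩
    · push_neg at h
      obtain ⟨U', hlt, hq⟩ := h
      obtain ⟨W, hW1, hW2⟩ := ih U' hlt hq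
      exact ⟨W, hW1.trans hlt.subset, hW2⟩

/-- every minimal blocking set is contained in the top tier. -/
theorem minimal_blocking_subset_top_tier
    (V : Finset α) (Q : α → Finset (Finset α)) (hwf : WellFormed V Q)
    (T : Finset α) (hT : IsTopTier V Q T)
    (B : Finset α) (hB : IsMinimalBlocking V Q B) :
    B ⊆ T := by
  intro b hb
  by_contra hbT
  obtain ⟨⟨hBV, hBblock⟩, hmin⟩ := hB
  apply hmin (B.erase b) (Finset.erase_ssubset hb)
  refine ⟨(Finset.erase_subset _ _).trans hBV, ?_⟩
  intro U hU
  obtain ⟨U', hU'sub, hU'min⟩ := exists_minimal_quorum_subset V Q U hU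
  obtain ⟨x, hx⟩ := hBblock U' hU'min.1
  rw [Finset.mem_inter] at hx
  have hxT : x ∈ T := (hT x).mpr ⟨U', hU'min, hx.2⟩
  refine ⟨x, Finset.mem_inter.mpr ⟨Finset.mem_erase.mpr ⟨?_, hx.1⟩, hU'sub hx.2⟩⟩
  rintro rfl; exact hbT hxT
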